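/- Suppose a > -2, |f_j| ≤ B·ρ^{-j} for all j ≥ 2 with B, ρ > 0, and S_∞ := Σ_{j=2}^∞ (-1)^j f_j/Γ(j+a) ≠ 0. Then the power series Σ_{k=2}^∞ m_k x^k, where m_k = (-1)^k Γ(k+a) Σ_{j=2}^k (-1)^j f_j/Γ(j+a), diverges for every x ≠ 0 (i.e. m_k x^k does not tend to 0). -/

import Mathlib

open Filter Finset


/-- If `a > -2`, `|f_j| ≤ B ρ^{-j}` and `S_∞ = Σ_{j≥2} (-1)^j f_j/Γ(j+a) ≠ 0`, then
`Σ m_k x^k` with `m_k = (-1)^k Γ(k+a) S_k` diverges for every `x ≠ 0`: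
`m_k x^k` does not tend to `0`. -/
theorem stmt2 (a : ℝ) (ha : -2 < a) (B ρ : ℝ) (hB : 0 < B) (hρ : 0 < ρ)
    (f : ℕ → ℝ) (hf : ∀ j, 2 ≤ j → |f j| ≤ B / ρ ^ j)
    (m : ℕ → ℝ)
    (hm : ∀ k, m k = (-1 : ℝ) ^ k * Real.Gamma ((k : ℝ) + a) *
      ∑ j ∈ Finset.Icc 2 k, (-1 : ℝ) ^ j * f j / Real.Gamma ((j : ℝ) + a))
    (hS : (∑' j : ℕ, if 2 ≤ j then (-1 : ℝ) ^ j * f j / Real.Gamma ((j : ℝ) + a) else 0) ≠ 0) :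
    ∀ x : ℝ, x ≠ 0 →
      ¬ Filter.Tendsto (fun k : ℕ => m k * x ^ k) Filter.atTop (nhds 0) := by
  intro x hx hten
  set g : ℕ → ℝ := fun j => if 2 ≤ j then (-1 : ℝ) ^ j * f j / Real.Gamma ((j : ℝ) + a) else 0
    with hg
  have hsum : Summable g := by
    by_contra h
    exact hS (tsum_eq_zero_of_not_summable h)
  set L : ℝ := ∑' j, g j with hLdef
  have hL : L ≠ 0 := hS
  have hLpos : 0 < |L| := abs_pos.mpr hL
  set Sfun : ℕ → ℝ :=
    fun k => ∑ j ∈ Finset.Icc 2 k, (-1 : ℝ) ^ j * f j / Real.Gamma ((j : ℝ) + a) with hSfun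
  have hSk : ∀ k, Sfun k = ∑ j ∈ Finset.range (k + 1), g j := by
    intro k
    have hsub : Finset.Icc 2 k ⊆ Finset.range (k + 1) := by
      intro j hj
      simp only [Finset.mem_Icc] at hj
      simp only [Finset.mem_range]
      omega
    have hzero : ∀ j ∈ Finset.range (k + 1), j ∉ Finset.Icc 2 k → g j = 0 := by
      intro j hj hj'
      simp only [Finset.mem_range] at hj
      simp only [Finset.mem_Icc] at hj'
      simp only [hg, if_neg (by omega : ¬ 2 ≤ j)]
    rw [← Finset.sum_subset hsub hzero]
    exact (Finset.sum_congr rfl fun j hj => (if_pos (Finset.mem_Icc.mp hj).1).symm)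
  have htendS : Tendsto Sfun atTop (nhds L) := by
    have h1 : Tendsto (fun n => ∑ j ∈ Finset.range n, g j) atTop (nhds L) :=
      hsum.hasSum.tendsto_sum_nat
    have h2 := h1.comp (tendsto_add_atTop_nat 1)
    refine h2.congr fun k => ?_
    exact (hSk k).symm
  have htendAbs : Tendsto (fun k => |Sfun k|) atTop (nhds |L|) := htendS.abs
  -- eventual bounds
  have e1 : ∀ᶠ k : ℕ in atTop, |L| / 2 ≤ |Sfun k| :=
    htendAbs.eventually_const_le (by linarith)
  have e2 : ∀ᶠ k : ℕ in atTop, |Sfun k| ≤ 3 * |L| / 2 :=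
    htendAbs.eventually_le_const (by linarith)
  have e3 : ∀ᶠ k : ℕ in atTop, (0:ℝ) < (k : ℝ) + a := by
    have : Tendsto (fun k : ℕ => (k : ℝ) + a) atTop atTop :=
      tendsto_atTop_add_const_right _ a tendsto_natCast_atTop_atTop
    exact this.eventually_gt_atTop 0
  have e4 : ∀ᶠ k : ℕ in atTop, (3:ℝ) ≤ ((k : ℝ) + a) * |x| := by
    have hxpos : 0 < |x| := abs_pos.mpr hx
    have h1 : Tendsto (fun k : ℕ => ((k : ℝ) + a) * |x|) atTop atTop := by
      have : Tendsto (fun k : ℕ => (k : ℝ) + a) atTop atTop :=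
        tendsto_atTop_add_const_right _ a tendsto_natCast_atTop_atTop
      exact this.atTop_mul_const hxpos
    exact h1.eventually_ge_atTop 3
  obtain ⟨N, hN⟩ := eventually_atTop.mp ((e1.and e2).and (e3.and e4))
  -- |m k * x^k| formula
  have habs : ∀ k : ℕ, 0 < (k : ℝ) + a →
      |m k * x ^ k| = Real.Gamma ((k : ℝ) + a) * |Sfun k| * |x| ^ k := by
    intro k hk
    rw [hm k, abs_mul, abs_mul, abs_mul, abs_pow, abs_pow, abs_neg, abs_one, one_pow, one_mul,
      abs_of_pos (Real.Gamma_pos_of_pos hk)]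
  have hxpos : 0 < |x| := abs_pos.mpr hx
  -- eventually increasing
  have hstep : ∀ k, N ≤ k → |m k * x ^ k| ≤ |m (k + 1) * x ^ (k + 1)| := by
    intro k hk
    obtain ⟨⟨h1, h2⟩, h3, h4⟩ := hN k hk
    obtain ⟨⟨h1', _⟩, h3', _⟩ := hN (k + 1) (by omega)
    have hG : 0 < Real.Gamma ((k : ℝ) + a) := Real.Gamma_pos_of_pos h3
    have hGrec : Real.Gamma (((k + 1 : ℕ) : ℝ) + a) = ((k : ℝ) + a) * Real.Gamma ((k : ℝ) + a) := by
      push_cast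
      rw [show (k : ℝ) + 1 + a = ((k : ℝ) + a) + 1 by ring, Real.Gamma_add_one (by linarith)]
    rw [habs k h3, habs (k + 1) h3', hGrec, pow_succ]
    have hxk : (0:ℝ) < |x| ^ k := pow_pos hxpos k
    calc Real.Gamma ((k : ℝ) + a) * |Sfun k| * |x| ^ k
        ≤ Real.Gamma ((k : ℝ) + a) * (3 * |L| / 2) * |x| ^ k := by
          apply mul_le_mul_of_nonneg_right _ hxk.le
          exact mul_le_mul_of_nonneg_left h2 hG.le
      _ ≤ Real.Gamma ((k : ℝ) + a) * ((((k : ℝ) + a) * |x|) * (|L| / 2)) * |x| ^ k := by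
          have key : 3 * |L| / 2 ≤ (((k : ℝ) + a) * |x|) * (|L| / 2) := by nlinarith
          exact mul_le_mul_of_nonneg_right (mul_le_mul_of_nonneg_left key hG.le) hxk.le
      _ = ((k : ℝ) + a) * Real.Gamma ((k : ℝ) + a) * (|x| ^ k * |x|) * (|L| / 2) := by ring
      _ ≤ ((k : ℝ) + a) * Real.Gamma ((k : ℝ) + a) * (|x| ^ k * |x|) * |Sfun (k + 1)| := by
          have hc : (0:ℝ) ≤ ((k : ℝ) + a) * Real.Gamma ((k : ℝ) + a) * (|x| ^ k * |x|) := by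
            positivity
          exact mul_le_mul_of_nonneg_left h1' hc
      _ = ((k : ℝ) + a) * Real.Gamma ((k : ℝ) + a) * |Sfun (k + 1)| * (|x| ^ k * |x|) := by ring
  have hmono : ∀ k, N ≤ k → |m N * x ^ N| ≤ |m k * x ^ k| := by
    intro k hk
    induction k, hk using Nat.le_induction with
    | base => exact le_refl _
    | succ k hk ih => exact ih.trans (hstep k hk)
  have hposN : 0 < |m N * x ^ N| := by
    obtain ⟨⟨h1, _⟩, h3, _⟩ := hN N le_rfl
    rw [habs N h3]
    have hG : 0 < Real.Gamma ((N : ℝ) + a) := Real.Gamma_pos_of_pos h3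
    have : 0 < |Sfun N| := lt_of_lt_of_le (by linarith) h1
    positivity
  have habs0 : Tendsto (fun k : ℕ => |m k * x ^ k|) atTop (nhds 0) := by
    have := hten.abs
    rwa [abs_zero] at this
  have hlt : ∀ᶠ k : ℕ in atTop, |m k * x ^ k| < |m N * x ^ N| :=
    habs0.eventually_lt_const hposN
  obtain ⟨M, hM⟩ := eventually_atTop.mp hlt
  have h1 := hmono (max N M) (le_max_left _ _)
  have h2 := hM (max N M) (le_max_right _ _)
  linarith
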